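/- Given real n×n matrices M, C, K with M invertible, let A = [[0, −I_n], [M⁻¹K, M⁻¹C]] ∈ ℝ^{2n×2n} be the state-space matrix. Suppose ν_1,…,ν_{2n} ∈ ℂ, right eigenvectors x_k^{(r)} ∈ ℂ^{2n} with A x_k^{(r)} = ν_k x_k^{(r)}, and left (row) eigenvectors x_k^{(l)} with x_k^{(l)} A = ν_k x_k^{(l)} are given, satisfying the biorthonormality conditions x_k^{(l)} x_l^{(r)} = δ_{kl} for all k, l (so that Σ_k x_k^{(r)} x_k^{(l)} = I_{2n}). Write each right eigenvector in block form x_k^{(r)} = (v_k^{(r)}; w_k^{(r)}) with v_k^{(r)}, w_k^{(r)} ∈ ℂ^n, and each left eigenvector as x_k^{(l)} = (v_k^{(l)}, w_k^{(l)}). Then for every s ∈ ℂ with ν_k + s ≠ 0 for all k, the matrix K + sC + s²M is invertible and (K + sC + s²M)^{-1} = Σ_{k=1}^{2n} v_k^{(r)} w_k^{(l)} M^{-1} / (ν_k + s). -/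

import Mathlib

open Matrix Complex

private lemma mul_vecMulVec' {p m q : Type*} [Fintype m] (A : Matrix p m ℂ) (u : m → ℂ)
    (v : q → ℂ) : A * vecMulVec u v = vecMulVec (A.mulVec u) v := by
  ext i j
  simp [Matrix.mul_apply, vecMulVec_apply, mulVec, dotProduct, Finset.sum_mul, mul_assoc]

private lemma vecMulVec_mul' {p m q : Type*} [Fintype m] (u : p → ℂ) (v : m → ℂ)
    (A : Matrix m q ℂ) : vecMulVec u v * A = vecMulVec u (vecMul v A) := by
  ext i j
  simp [Matrix.mul_apply, vecMulVec_apply, vecMul, dotProduct, Finset.mul_sum, mul_assoc]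

private lemma vecMulVec_smul_left' {p q : Type*} (a : ℂ) (u : p → ℂ) (v : q → ℂ) :
    vecMulVec (a • u) v = a • vecMulVec u v := by
  ext i j; simp [vecMulVec_apply, mul_assoc]

private lemma vecMulVec_smul_right' {p q : Type*} (a : ℂ) (u : p → ℂ) (v : q → ℂ) :
    vecMulVec u (a • v) = a • vecMulVec u v := by
  ext i j; simp [vecMulVec_apply]; ring

private lemma mapC_mul {n : ℕ} (X Y : Matrix (Fin n) (Fin n) ℝ) :
    (X * Y).map Complex.ofReal = X.map Complex.ofReal * Y.map Complex.ofReal := by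
  ext i j; simp [Matrix.mul_apply]

private lemma mapC_one {n : ℕ} :
    ((1 : Matrix (Fin n) (Fin n) ℝ)).map Complex.ofReal = 1 := by
  ext i j; simp [Matrix.one_apply, apply_ite]

/-- Dynamic compliance of a system of general structure: given the state-space matrix
`A = [[0, -I], [M⁻¹K, M⁻¹C]]`, a full biorthonormal set of right/left eigenpairs
`(ν k, x_r k, x_l k)`, and `s : ℂ` with `ν k + s ≠ 0` for all `k`, the matrix
`K + sC + s²M` is invertible with inverse `∑ k, v_r k ⬝ (w_l k) M⁻¹ / (ν k + s)`,
where `v_r k` is the upper block of `x_r k` and `w_l k` the lower block of `x_l k`. -/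
theorem dynamic_compliance_general
    (n : ℕ) (M C K : Matrix (Fin n) (Fin n) ℝ) (hM : IsUnit M)
    (A : Matrix (Fin n ⊕ Fin n) (Fin n ⊕ Fin n) ℝ)
    (hA : A = Matrix.fromBlocks 0 (-1) (M⁻¹ * K) (M⁻¹ * C))
    (ν : Fin (2 * n) → ℂ)
    (xr xl : Fin (2 * n) → (Fin n ⊕ Fin n → ℂ))
    (hxr : ∀ k, (A.map Complex.ofReal).mulVec (xr k) = ν k • xr k)
    (hxl : ∀ k, Matrix.vecMul (xl k) (A.map Complex.ofReal) = ν k • xl k)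
    (hxr0 : ∀ k, xr k ≠ 0) (hxl0 : ∀ k, xl k ≠ 0)
    (hbiorth : ∀ k l, xl k ⬝ᵥ xr l = if k = l then (1 : ℂ) else 0)
    (hresol : ∑ k, Matrix.vecMulVec (xr k) (xl k) = (1 : Matrix (Fin n ⊕ Fin n) (Fin n ⊕ Fin n) ℂ))
    (s : ℂ) (hs : ∀ k, ν k + s ≠ 0) :
    IsUnit (K.map Complex.ofReal + s • C.map Complex.ofReal + s ^ 2 • M.map Complex.ofReal) ∧
      (K.map Complex.ofReal + s • C.map Complex.ofReal + s ^ 2 • M.map Complex.ofReal)⁻¹ =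
        ∑ k, (ν k + s)⁻¹ •
          (Matrix.vecMulVec (fun i => xr k (Sum.inl i)) (fun j => xl k (Sum.inr j)) *
            (M⁻¹).map Complex.ofReal) := by
  have hMdet : IsUnit M.det := (Matrix.isUnit_iff_isUnit_det M).mp hM
  set Mc := M.map Complex.ofReal with hMcdef
  set Cc := C.map Complex.ofReal with hCcdef
  set Kc := K.map Complex.ofReal with hKcdef
  set Aℂ := A.map Complex.ofReal with hACdef
  -- complexified M is invertible
  have hMc1 : Mc * ((M⁻¹).map Complex.ofReal) = 1 := by
    rw [hMcdef, ← mapC_mul, Matrix.mul_nonsing_inv M hMdet, mapC_one]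
  have hMcinv : Mc⁻¹ = (M⁻¹).map Complex.ofReal := Matrix.inv_eq_right_inv hMc1
  have hMcdetu : IsUnit Mc.det := by
    refine IsUnit.of_mul_eq_one ((M⁻¹).map Complex.ofReal).det ?_
    rw [← Matrix.det_mul, hMc1, Matrix.det_one]
  have hMM : Mc * Mc⁻¹ = 1 := Matrix.mul_nonsing_inv Mc hMcdetu
  have hIM : Mc⁻¹ * Mc = 1 := Matrix.nonsing_inv_mul Mc hMcdetu
  have hKc' : (M⁻¹ * K).map Complex.ofReal = Mc⁻¹ * Kc := by
    rw [mapC_mul, hMcinv, hKcdef]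
  have hCc' : (M⁻¹ * C).map Complex.ofReal = Mc⁻¹ * Cc := by
    rw [mapC_mul, hMcinv, hCcdef]
  -- the resolvent
  set B : Matrix (Fin n ⊕ Fin n) (Fin n ⊕ Fin n) ℂ :=
    ∑ k, (ν k + s)⁻¹ • vecMulVec (xr k) (xl k) with hBdef
  have hsm1 : ∀ v : Fin n ⊕ Fin n → ℂ,
      Matrix.vecMul v (s • (1 : Matrix (Fin n ⊕ Fin n) (Fin n ⊕ Fin n) ℂ)) = s • v := by
    intro v; ext j
    simp [Matrix.vecMul, dotProduct, Matrix.one_apply, apply_ite, mul_comm]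
  have h1 : (Aℂ + s • 1) * B = 1 := by
    rw [hBdef, Finset.mul_sum]
    have hterm : ∀ k ∈ Finset.univ,
        (Aℂ + s • 1) * ((ν k + s)⁻¹ • vecMulVec (xr k) (xl k)) = vecMulVec (xr k) (xl k) := by
      intro k _
      rw [Matrix.mul_smul, mul_vecMulVec', Matrix.add_mulVec, hxr k, Matrix.smul_mulVec,
        Matrix.one_mulVec, ← add_smul, vecMulVec_smul_left', inv_smul_smul₀ (hs k)]
    rw [Finset.sum_congr rfl hterm, hresol]
  have h2 : B * (Aℂ + s • 1) = 1 := by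
    rw [hBdef, Finset.sum_mul]
    have hterm : ∀ k ∈ Finset.univ,
        ((ν k + s)⁻¹ • vecMulVec (xr k) (xl k)) * (Aℂ + s • 1) = vecMulVec (xr k) (xl k) := by
      intro k _
      rw [Matrix.smul_mul, vecMulVec_mul', Matrix.vecMul_add, hxl k, hsm1,
        ← add_smul, vecMulVec_smul_right', inv_smul_smul₀ (hs k)]
    rw [Finset.sum_congr rfl hterm, hresol]
  -- block form of A + s•1
  have hAs : Aℂ + s • 1 =
      Matrix.fromBlocks (s • 1) (-1) ((M⁻¹ * K).map Complex.ofReal)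
        ((M⁻¹ * C).map Complex.ofReal + s • 1) := by
    rw [hACdef, hA]
    ext (i | i) (j | j) <;>
        simp [Matrix.fromBlocks, Matrix.one_apply, apply_ite, Matrix.map_apply,
          Matrix.smul_apply] <;>
      split_ifs <;> simp_all
  set B11 := B.toBlocks₁₁ with hB11def
  set B12 := B.toBlocks₁₂ with hB12def
  set B21 := B.toBlocks₂₁ with hB21def
  set B22 := B.toBlocks₂₂ with hB22def
  have hBblocks : B = Matrix.fromBlocks B11 B12 B21 B22 := (Matrix.fromBlocks_toBlocks B).symm
  rw [hAs, hBblocks, Matrix.fromBlocks_multiply, ← Matrix.fromBlocks_one] at h1 h2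
  have e12 := congrArg Matrix.toBlocks₁₂ h1
  have e22 := congrArg Matrix.toBlocks₂₂ h1
  have f11 := congrArg Matrix.toBlocks₁₁ h2
  have f12 := congrArg Matrix.toBlocks₁₂ h2
  simp only [Matrix.toBlocks_fromBlocks₁₂, Matrix.toBlocks_fromBlocks₂₂,
    Matrix.toBlocks_fromBlocks₁₁] at e12 e22 f11 f12
  have hB22e : B22 = s • B12 := by
    have h := e12
    simp only [smul_mul_assoc, one_mul, neg_one_mul] at h
    exact (add_neg_eq_zero.mp h).symm
  have hB11e : B11 = B12 * ((M⁻¹ * C).map Complex.ofReal) + s • B12 := by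
    have h := f12
    simp only [mul_neg_one, Matrix.mul_add, mul_smul_comm, mul_one, add_comm] at h
    exact (add_neg_eq_zero.mp h).symm
  -- right inverse property
  have hR : (Kc + s • Cc + s ^ 2 • Mc) * B12 = Mc := by
    rw [hB22e, hKc', hCc'] at e22
    have h := congrArg (fun X => Mc * X) e22
    simp only [Matrix.mul_add, mul_one] at h
    calc (Kc + s • Cc + s ^ 2 • Mc) * B12
        = Mc * (Mc⁻¹ * Kc * B12) + Mc * ((Mc⁻¹ * Cc + s • 1) * (s • B12)) := by
          simp only [Matrix.add_mul, Matrix.mul_add, mul_smul_comm, smul_mul_assoc,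
            ← Matrix.mul_assoc, hMM, one_mul, mul_one, smul_smul]
          rw [pow_two]
          simp only [smul_add, smul_smul]; abel
      _ = Mc := h
  have hG : (Kc + s • Cc + s ^ 2 • Mc) * (B12 * Mc⁻¹) = 1 := by
    rw [← Matrix.mul_assoc, hR, hMM]
  -- left inverse property
  have hL : (B12 * Mc⁻¹) * (Kc + s • Cc + s ^ 2 • Mc) = 1 := by
    rw [hB11e, hKc', hCc'] at f11
    calc (B12 * Mc⁻¹) * (Kc + s • Cc + s ^ 2 • Mc)
        = (B12 * (Mc⁻¹ * Cc) + s • B12) * (s • 1) + B12 * (Mc⁻¹ * Kc) := by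
          simp only [Matrix.mul_add, Matrix.add_mul, mul_smul_comm, smul_mul_assoc,
            ← Matrix.mul_assoc, mul_one, one_mul, smul_smul]
          rw [pow_two, Matrix.mul_assoc B12 Mc⁻¹ Mc, hIM, mul_one]
          simp only [smul_add, smul_smul]; abel
      _ = 1 := f11
  have hdetu : IsUnit (Kc + s • Cc + s ^ 2 • Mc).det := by
    refine IsUnit.of_mul_eq_one (B12 * Mc⁻¹).det ?_
    rw [← Matrix.det_mul, hG, Matrix.det_one]
  refine ⟨(Matrix.isUnit_iff_isUnit_det _).mpr hdetu, ?_⟩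
  rw [Matrix.inv_eq_right_inv hG]
  have hB12e : B12 = ∑ k, (ν k + s)⁻¹ •
      vecMulVec (fun i => xr k (Sum.inl i)) (fun j => xl k (Sum.inr j)) := by
    ext i j
    simp [hB12def, hBdef, Matrix.toBlocks₁₂, Matrix.sum_apply, vecMulVec_apply,
      Matrix.smul_apply]
  rw [hB12e, ← hMcinv, Finset.sum_mul]
  refine Finset.sum_congr rfl fun k _ => ?_
  rw [smul_mul_assoc]
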